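/- The function γ(x) = log(1-x) + (x-2)/(x-1) - log(1+x) - (x+2)/(x+1) is strictly positive for x ∈ (0,1). -/

import Mathlib

open Real

noncomputable def fγ (t : ℝ) : ℝ := Real.log (1 - t) - Real.log (1 + t) + 2 * t / (1 - t ^ 2)

lemma fγ_hasDerivAt {t : ℝ} (h1 : -1 < t) (h2 : t < 1) :
    HasDerivAt fγ (4 * t ^ 2 / (1 - t ^ 2) ^ 2) t := by
  have ht1 : (1 : ℝ) - t ≠ 0 := by nlinarith
  have ht2 : (1 : ℝ) + t ≠ 0 := by nlinarith
  have htd : (1 : ℝ) - t ^ 2 ≠ 0 := by nlinarith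
  have hA : HasDerivAt (fun t : ℝ => Real.log (1 - t)) (-1 / (1 - t)) t := by
    have : HasDerivAt (fun t : ℝ => 1 - t) (-1) t := by
      simpa using (hasDerivAt_id t).const_sub (1:ℝ)
    simpa using this.log ht1
  have hB : HasDerivAt (fun t : ℝ => Real.log (1 + t)) (1 / (1 + t)) t := by
    have : HasDerivAt (fun t : ℝ => 1 + t) (1) t := by
      simpa using (hasDerivAt_id t).const_add (1:ℝ)
    simpa using this.log ht2
  have hC : HasDerivAt (fun t : ℝ => 2 * t / (1 - t ^ 2))
      ((2 * (1 - t ^ 2) - 2 * t * (-(2 * t))) / (1 - t ^ 2) ^ 2) t := by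
    have hn : HasDerivAt (fun t : ℝ => 2 * t) 2 t := by
      simpa using (hasDerivAt_id t).const_mul (2:ℝ)
    have hd : HasDerivAt (fun t : ℝ => 1 - t ^ 2) (-(2 * t)) t := by
      have : HasDerivAt (fun t : ℝ => t ^ 2) (2 * t) t := by
        simpa using hasDerivAt_pow 2 t
      simpa using this.const_sub (1:ℝ)
    exact hn.div hd htd
  have := (hA.sub hB).add hC
  convert (show HasDerivAt fγ _ t from this) using 1
  field_simp
  ring
theorem stmt4 (x : ℝ) (hx : x ∈ Set.Ioo (0:ℝ) 1) :
    0 < Real.log (1 - x) + (x - 2) / (x - 1) - Real.log (1 + x) - (x + 2) / (x + 1) := by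
  obtain ⟨hx0, hx1⟩ := hx
  have hmono : StrictMonoOn fγ (Set.Icc 0 x) := by
    apply StrictMonoOn.mono (s := Set.Icc 0 x) ?_ (le_refl _)
    apply strictMonoOn_of_deriv_pos (convex_Icc 0 x)
    · apply ContinuousOn.mono (s := Set.Icc 0 x) ?_ (le_refl _)
      intro t ht
      have h1 : (-1:ℝ) < t := by linarith [ht.1]
      have h2 : t < 1 := lt_of_le_of_lt ht.2 hx1
      exact ((fγ_hasDerivAt h1 h2).continuousAt).continuousWithinAt
    · intro t ht
      rw [interior_Icc] at ht
      have h1 : (-1:ℝ) < t := by linarith [ht.1]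
      have h2 : t < 1 := ht.2.trans hx1
      rw [(fγ_hasDerivAt h1 h2).deriv]
      have h3 : (0:ℝ) < 1 - t ^ 2 := by nlinarith
      have h4 : (0:ℝ) < t := ht.1
      positivity
  have hlt : fγ 0 < fγ x :=
    hmono (Set.left_mem_Icc.mpr hx0.le) (Set.right_mem_Icc.mpr hx0.le) hx0
  have h0 : fγ 0 = 0 := by simp [fγ]
  have ht1 : x - 1 ≠ 0 := by linarith
  have ht2 : x + 1 ≠ 0 := by linarith
  have heq : Real.log (1 - x) + (x - 2) / (x - 1) - Real.log (1 + x) - (x + 2) / (x + 1)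
      = fγ x := by
    unfold fγ
    have : (x - 2) / (x - 1) - (x + 2) / (x + 1) = 2 * x / (1 - x ^ 2) := by
      have htd : (1:ℝ) - x ^ 2 ≠ 0 := by nlinarith
      field_simp
      ring
    linarith [this]
  rw [heq]
  linarith [hlt, h0]
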